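/- Let h₀ > 0 and let f₀, λ, c, c₁, c₀ be real numbers satisfying c² = λ + f₀·c₁. Define F(x) := (c/√h₀)·x·(ln x − 1) + (f₀/(4h₀))·x·((ln x)² − 2·ln x + 2) + c₁·x + c₀ for x > 0. Then F″(x) = (c/√h₀)·(1/x) + (f₀/(2h₀))·(ln x)/x and h₀·x²·(F″(x))² = λ + f₀·F′(x) for all x > 0. -/

import Mathlib

theorem stmt_6 (h₀ f₀ lam c c₁ c₀ : ℝ) (hh₀ : 0 < h₀)
    (hc : c ^ 2 = lam + f₀ * c₁)
    (F : ℝ → ℝ)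
    (hF : ∀ x : ℝ, 0 < x →
      F x = (c / Real.sqrt h₀) * x * (Real.log x - 1)
        + (f₀ / (4 * h₀)) * x * ((Real.log x) ^ 2 - 2 * Real.log x + 2)
        + c₁ * x + c₀) :
    ∀ x : ℝ, 0 < x →
      deriv (deriv F) x = (c / Real.sqrt h₀) * (1 / x)
          + (f₀ / (2 * h₀)) * Real.log x / x ∧
      h₀ * x ^ 2 * (deriv (deriv F) x) ^ 2 = lam + f₀ * deriv F x := by
  set a := c / Real.sqrt h₀ with ha
  set b := f₀ / (4 * h₀) with hb
  -- first derivative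
  have hG : ∀ x : ℝ, 0 < x → HasDerivAt F (a * Real.log x + b * (Real.log x) ^ 2 + c₁) x := by
    intro x hx
    have hev : F =ᶠ[nhds x] fun y =>
        a * y * (Real.log y - 1) + b * y * ((Real.log y) ^ 2 - 2 * Real.log y + 2)
          + c₁ * y + c₀ := by
      filter_upwards [IsOpen.mem_nhds isOpen_Ioi hx] with y hy
      exact hF y hy
    have hlog : HasDerivAt Real.log x⁻¹ x := Real.hasDerivAt_log hx.ne'
    have h1 : HasDerivAt (fun y =>
        a * y * (Real.log y - 1) + b * y * ((Real.log y) ^ 2 - 2 * Real.log y + 2)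
          + c₁ * y + c₀)
        (a * Real.log x + b * (Real.log x) ^ 2 + c₁) x := by
      have H := ((((hasDerivAt_id x).const_mul a).mul (hlog.sub_const 1)).add
          (((hasDerivAt_id x).const_mul b).mul
            (((hlog.pow 2).sub (hlog.const_mul 2)).add_const 2))).add
          (((hasDerivAt_id x).const_mul c₁).add_const c₀)
      convert H using 1
      · rfl
      · rfl
      · ext y; simp; ring
      · simp only [id_eq, Pi.sub_apply, Pi.pow_apply]
        field_simp
        ring
    exact hev.hasDerivAt_iff.mpr h1
  have hderivF : ∀ x : ℝ, 0 < x →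
      deriv F x = a * Real.log x + b * (Real.log x) ^ 2 + c₁ := fun x hx => (hG x hx).deriv
  intro x hx
  -- second derivative
  have hev2 : deriv F =ᶠ[nhds x] fun y => a * Real.log y + b * (Real.log y) ^ 2 + c₁ := by
    filter_upwards [IsOpen.mem_nhds isOpen_Ioi hx] with y hy
    exact hderivF y hy
  have hlog : HasDerivAt Real.log x⁻¹ x := Real.hasDerivAt_log hx.ne'
  have h2 : HasDerivAt (fun y => a * Real.log y + b * (Real.log y) ^ 2 + c₁)
      (a * (1/x) + b * (2 * Real.log x * (1/x))) x := by
    have H := ((hlog.const_mul a).add ((hlog.pow 2).const_mul b)).add_const c₁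
    convert H using 1
    · rfl
    · rfl
    · rfl
    · simp

  have hd2 : deriv (deriv F) x = a * (1/x) + b * (2 * Real.log x * (1/x)) :=
    (hev2.hasDerivAt_iff.mpr h2).deriv
  have hsq : Real.sqrt h₀ ^ 2 = h₀ := Real.sq_sqrt hh₀.le
  have hs : Real.sqrt h₀ ≠ 0 := (Real.sqrt_pos.mpr hh₀).ne'
  have ha2 : h₀ * a ^ 2 = c ^ 2 := by
    rw [ha, div_pow, hsq]; field_simp
  have hbf : 4 * h₀ * b = f₀ := by rw [hb]; field_simp
  constructor
  · rw [hd2, ha, hb]; field_simp; ring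
  · rw [hd2, hderivF x hx]
    set L := Real.log x
    have key : h₀ * x ^ 2 * (a * (1/x) + b * (2 * L * (1/x))) ^ 2
        = h₀ * a ^ 2 + (4 * h₀ * b) * a * L + (4 * h₀ * b) * b * L ^ 2 := by
      field_simp
      ring
    rw [key, ha2, hbf]
    linear_combination hc
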